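/- Let f ~ GP prior with joint covariance K over training inputs X and a test input x, and let y = f_X + ε with ε ~ N(0, σ²I) independent. Then the random function defined by pathwise conditioning, (f|y)(x) = f(x) + K_{xX}(K_{XX} + σ²I)⁻¹(y - (f_X + ε')), with (f(x), f_X) jointly Gaussian with the prior covariance and ε' ~ N(0, σ²I) independent of f, has distribution N(K_{xX}(K_{XX}+σ²I)⁻¹y, K_{xx} - K_{xX}(K_{XX}+σ²I)⁻¹K_{Xx}), matching the exact GP posterior at x. -/

import Mathlib

open MeasureTheory ProbabilityTheory Matrix

/-- Pathwise conditioning recovers the exact GP posterior at a test point `x`.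
`(fx, fX, eps)` is jointly Gaussian with mean zero, covariance blocks
`Kxx` (scalar), `KxX` (cross-covariance), `KXX` (training covariance), and
independent noise `eps ~ N(0, σ²I)`; joint Gaussianity and independence are
encoded by requiring every linear functional to be Gaussian with the
corresponding variance. -/
theorem pathwise_conditioning {n : ℕ} {Ω : Type*} [MeasureSpace Ω]
    [IsProbabilityMeasure (ℙ : Measure Ω)]
    (fx : Ω → ℝ) (fX : Ω → Fin n → ℝ) (eps : Ω → Fin n → ℝ)
    (Kxx : ℝ) (KxX : Fin n → ℝ) (KXX : Matrix (Fin n) (Fin n) ℝ)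
    (hKXX : KXX.PosSemidef) (σ : ℝ) (hσ : 0 < σ)
    (hgauss : ∀ (a : ℝ) (b c : Fin n → ℝ),
      Measure.map (fun ω => a * fx ω + b ⬝ᵥ fX ω + c ⬝ᵥ eps ω) ℙ =
        gaussianReal 0
          (a * a * Kxx + 2 * a * (b ⬝ᵥ KxX) + b ⬝ᵥ (KXX *ᵥ b)
            + σ ^ 2 * (c ⬝ᵥ c)).toNNReal)
    (y : Fin n → ℝ) :
    Measure.map
        (fun ω => fx ω +
          KxX ⬝ᵥ ((KXX + σ ^ 2 • (1 : Matrix (Fin n) (Fin n) ℝ))⁻¹ *ᵥ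
            (y - (fX ω + eps ω)))) ℙ =
      gaussianReal
        (KxX ⬝ᵥ ((KXX + σ ^ 2 • (1 : Matrix (Fin n) (Fin n) ℝ))⁻¹ *ᵥ y))
        (Kxx - KxX ⬝ᵥ ((KXX + σ ^ 2 • (1 : Matrix (Fin n) (Fin n) ℝ))⁻¹ *ᵥ KxX)).toNNReal := by
  set M : Matrix (Fin n) (Fin n) ℝ := KXX + σ ^ 2 • (1 : Matrix (Fin n) (Fin n) ℝ) with hMdef
  -- `M` is positive definite, hence invertible.
  have hpd1 : (σ ^ 2 • (1 : Matrix (Fin n) (Fin n) ℝ)).PosDef := by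
    refine Matrix.PosDef.of_dotProduct_mulVec_pos ?_ ?_
    · simp [Matrix.IsHermitian, Matrix.conjTranspose_smul]
    · intro x hx
      have hxx : 0 < star x ⬝ᵥ x := by
        simpa using Matrix.dotProduct_star_self_pos_iff.mpr hx
      simp only [Matrix.smul_mulVec, Matrix.one_mulVec, dotProduct_smul]
      exact smul_pos (pow_pos hσ 2) hxx
  have hMpd : M.PosDef := Matrix.PosDef.posSemidef_add hKXX hpd1
  have hMdet : IsUnit M.det := isUnit_iff_ne_zero.mpr hMpd.det_pos.ne'
  have hMinvSymm : (M⁻¹)ᵀ = M⁻¹ := by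
    rw [Matrix.transpose_nonsing_inv]
    congr 1
    simpa [Matrix.IsHermitian] using hMpd.isHermitian
  set u : Fin n → ℝ := M⁻¹ *ᵥ KxX with hu
  -- `KxX ⬝ᵥ (M⁻¹ *ᵥ v) = u ⬝ᵥ v` for all `v`
  have hdot : ∀ v : Fin n → ℝ, KxX ⬝ᵥ (M⁻¹ *ᵥ v) = u ⬝ᵥ v := by
    intro v
    rw [Matrix.dotProduct_mulVec, ← Matrix.mulVec_transpose, hMinvSymm]
  -- key identity: M *ᵥ u = KxX
  have hMu : M *ᵥ u = KxX := by
    rw [hu, Matrix.mulVec_mulVec, Matrix.mul_nonsing_inv M hMdet, Matrix.one_mulVec]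
  -- variance identity
  have hvar : 1 * 1 * Kxx + 2 * 1 * ((-u) ⬝ᵥ KxX) + (-u) ⬝ᵥ (KXX *ᵥ (-u))
      + σ ^ 2 * ((-u) ⬝ᵥ (-u)) = Kxx - KxX ⬝ᵥ u := by
    have h1 : u ⬝ᵥ (KXX *ᵥ u) + σ ^ 2 * (u ⬝ᵥ u) = u ⬝ᵥ KxX := by
      calc u ⬝ᵥ (KXX *ᵥ u) + σ ^ 2 * (u ⬝ᵥ u)
          = u ⬝ᵥ (M *ᵥ u) := by
            rw [hMdef, Matrix.add_mulVec, dotProduct_add, Matrix.smul_mulVec,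
              Matrix.one_mulVec, dotProduct_smul, smul_eq_mul]
      _ = u ⬝ᵥ KxX := by rw [hMu]
    have h2 : KxX ⬝ᵥ u = u ⬝ᵥ KxX := dotProduct_comm _ _
    simp only [neg_dotProduct, dotProduct_neg, Matrix.mulVec_neg, neg_neg, mul_neg]
    linarith
  -- apply the joint-Gaussianity hypothesis with `a = 1`, `b = c = -u`
  have hZ := hgauss 1 (-u) (-u)
  rw [hvar] at hZ
  set m : ℝ := KxX ⬝ᵥ (M⁻¹ *ᵥ y) with hm
  set Z : Ω → ℝ := fun ω => 1 * fx ω + (-u) ⬝ᵥ fX ω + (-u) ⬝ᵥ eps ω with hZdef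
  -- rewrite the target function as `m + Z`
  have hfun : (fun ω => fx ω + KxX ⬝ᵥ (M⁻¹ *ᵥ (y - (fX ω + eps ω))))
      = fun ω => m + Z ω := by
    funext ω
    have := hdot (y - (fX ω + eps ω))
    rw [this]
    simp only [hZdef, hm, hdot y, one_mul, neg_dotProduct]
    rw [dotProduct_sub, dotProduct_add]
    ring
  rw [hfun]
  -- translation of a Gaussian
  have hZm : AEMeasurable Z := aemeasurable_of_map_neZero (by rw [hZ]; infer_instance)
  have : Measure.map (fun ω => m + Z ω) ℙ = (Measure.map Z ℙ).map (m + ·) := by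
    rw [AEMeasurable.map_map_of_aemeasurable (measurable_const_add m).aemeasurable hZm]
    rfl
  rw [this, hZ, gaussianReal_map_const_add m, zero_add]
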